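/- Let P* be a set of primes possibly together with the symbol ∞ such that, for every p ∈ P*, one has E[|log|a₁|_p|] < ∞, E[log⁺|b₁|_p] < ∞ and φ_p = E[log|a₁|_p] < 0, and let Z_∞^p ∈ ℚ_p denote the corresponding almost sure limit of Σ_{k=1}^n a₁⋯a_{k−1} b_k for each p ∈ P*. Then almost surely, for every point z = (z_p)_{p∈P*} of the topological product ∏_{p∈P*} ℚ_p, the orbit (A_n z_p + B_n)_{p∈P*} converges to (Z_∞^p)_{p∈P*} in the product topology as n → ∞. -/

import Mathlib

open MeasureTheory ProbabilityTheory Filter Topology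

lemma aux_sum_log {Ω : Type*} [MeasureSpace Ω] [IsProbabilityMeasure (ℙ : Measure Ω)]
    (X : ℕ → Ω → ℝ) (hint : Integrable (X 0) ℙ)
    (hindep : Pairwise (Function.onFun (fun f g => IndepFun f g ℙ) X))
    (hident : ∀ i, IdentDistrib (X i) (X 0) ℙ ℙ)
    (hneg : ∫ ω, X 0 ω ∂ℙ < 0) :
    ∀ᵐ ω ∂ℙ, Tendsto (fun n => ∑ k ∈ Finset.range n, X k ω) atTop atBot := by
  filter_upwards [strong_law_ae_real X hint hindep hident] with ω hω
  have h1 : Tendsto (fun n : ℕ => (n : ℝ) * ((∑ k ∈ Finset.range n, X k ω) / n))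
      atTop atBot :=
    Tendsto.atTop_mul_neg hneg tendsto_natCast_atTop_atTop hω
  refine h1.congr' ?_
  filter_upwards [eventually_ge_atTop 1] with n hn
  have : (n : ℝ) ≠ 0 := Nat.cast_ne_zero.mpr (by omega)
  field_simp


/-- Let `P*` be a (countable) family of places of `ℚ` — each realized
by a complete normed field `K i` with a dense embedding `ι i : ℚ →+* K i` whose norm
restricts on `ℚ` to the usual absolute value (`p = ∞`) or to a `p`-adic one — such that
for each `i` one has `E[|log |a₁|_p|] < ∞`, `E[log⁺ |b₁|_p] < ∞` and
`φ_p = E[log |a₁|_p] < 0`, and let `Z i ∈ K i` be the corresponding a.s. limit of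
`B_n = Σ_{k=1}^n a₁⋯a_{k-1} b_k`.  Then almost surely, for every point
`z = (z_p)_{p∈P*}` of the product `∏_{p∈P*} ℚ_p`, the orbit `(A_n z_p + B_n)_p`
converges to `(Z_∞^p)_p` in the product topology. -/
theorem statement6
    {Ω : Type*} [MeasureSpace Ω] [IsProbabilityMeasure (ℙ : Measure Ω)]
    (a b : ℕ → Ω → ℚ)
    (hmeas : ∀ n, Measurable fun ω => (a n ω, b n ω))
    (hindep : iIndepFun (fun n ω => (a n ω, b n ω)) ℙ)
    (hident : ∀ n, IdentDistrib (fun ω => (a n ω, b n ω)) (fun ω => (a 0 ω, b 0 ω)) ℙ ℙ)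
    (hne : ∀ n ω, a n ω ≠ 0)
    {P : Type*} [Countable P]
    {K : P → Type*} [∀ i, NormedField (K i)] [∀ i, CompleteSpace (K i)]
    (ι : ∀ i, ℚ →+* K i) (hdense : ∀ i, DenseRange (ι i))
    (hplace : ∀ i, (∀ q : ℚ, ‖ι i q‖ = |(q : ℝ)|) ∨
      ∃ p : ℕ, p.Prime ∧ ∀ q : ℚ, ‖ι i q‖ = (padicNorm p q : ℝ))
    (hInta : ∀ i, Integrable (fun ω => Real.log ‖ι i (a 0 ω)‖) ℙ)
    (hIntb : ∀ i, Integrable (fun ω => max (Real.log ‖ι i (b 0 ω)‖) 0) ℙ)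
    (hdrift : ∀ i, ∫ ω, Real.log ‖ι i (a 0 ω)‖ ∂ℙ < 0)
    (Z : ∀ i, Ω → K i)
    (hZ : ∀ i, ∀ᵐ ω ∂ℙ,
      Tendsto (fun n => ι i (∑ k ∈ Finset.range n, (∏ j ∈ Finset.range k, a j ω) * b k ω))
        atTop (𝓝 (Z i ω))) :
    ∀ᵐ ω ∂ℙ, ∀ z : (i : P) → K i,
      Tendsto (fun n => fun i =>
          ι i (∏ k ∈ Finset.range n, a k ω) * z i
            + ι i (∑ k ∈ Finset.range n, (∏ j ∈ Finset.range k, a j ω) * b k ω))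
        atTop (𝓝 (fun i => Z i ω)) := by
  -- For each place, A_n → 0 almost surely.
  have hA : ∀ i, ∀ᵐ ω ∂ℙ,
      Tendsto (fun n => ι i (∏ k ∈ Finset.range n, a k ω)) atTop (𝓝 0) := by
    intro i
    set f : ℚ × ℚ → ℝ := fun p => Real.log ‖ι i p.1‖ with hf
    have hfm : Measurable f := measurable_of_countable f
    set X : ℕ → Ω → ℝ := fun n ω => f (a n ω, b n ω) with hX
    have hint : Integrable (X 0) ℙ := hInta i
    have hpind : Pairwise (Function.onFun (fun f g => IndepFun f g ℙ) X) := fun m n hmn =>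
      (hindep.indepFun hmn).comp hfm hfm
    have hid : ∀ n, IdentDistrib (X n) (X 0) ℙ ℙ := fun n =>
      (hident n).comp hfm
    filter_upwards [aux_sum_log X hint hpind hid (hdrift i)] with ω hω
    have hnorm : ∀ n, ‖ι i (∏ k ∈ Finset.range n, a k ω)‖ =
        Real.exp (∑ k ∈ Finset.range n, X k ω) := by
      intro n
      rw [Real.exp_sum, map_prod]
      rw [norm_prod]
      refine Finset.prod_congr rfl fun k _ => ?_
      rw [Real.exp_log]
      have : ι i (a k ω) ≠ 0 := by
        simpa using (RingHom.injective (ι i)).ne_iff.mpr (hne k ω)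
      exact norm_pos_iff.mpr this
    rw [tendsto_zero_iff_norm_tendsto_zero]
    simp only [hnorm]
    exact Real.tendsto_exp_atBot.comp hω
  rw [← ae_all_iff] at hA hZ
  filter_upwards [hA, hZ] with ω hAω hZω z
  rw [tendsto_pi_nhds]
  intro i
  have := ((hAω i).mul_const (z i)).add (hZω i)
  simpa using this
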